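/- There exists ε₀ > 0 such that for every real ε with 0 < ε ≤ ε₀ there are no complex numbers a, b, z with |z| ≤ 1 satisfying simultaneously 4·conj(z) + ε² = a(a − ε), z = b(b − ε), and I·(√(1 − |z|²) : ℂ) = a·b. -/

import Mathlib

/-- For all sufficiently small `ε > 0`, the membrane
`H = {(4·conj z + ε², z, i√(1 − |z|²)) : |z| ≤ 1}` is disjoint from the image of the
deformation `Φ_ε(s,t) = ((s−ε)s, (t−ε)t, st)` of the `A₁`-germ: there are no
`a, b, z ∈ ℂ` with `|z| ≤ 1`, `4·conj z + ε² = a(a−ε)`, `z = b(b−ε)` and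
`i√(1 − |z|²) = ab`. -/
theorem stmt_19 :
    ∃ ε₀ : ℝ, 0 < ε₀ ∧
      ∀ ε : ℝ, 0 < ε → ε ≤ ε₀ →
        ¬ ∃ a b z : ℂ, ‖z‖ ≤ 1 ∧
          4 * (starRingEnd ℂ) z + (ε : ℂ) ^ 2 = a * (a - (ε : ℂ)) ∧
          z = b * (b - (ε : ℂ)) ∧
          Complex.I * ((Real.sqrt (1 - ‖z‖ ^ 2) : ℝ) : ℂ) = a * b := by
  refine ⟨1/10, by norm_num, ?_⟩
  rintro ε hε hε10 ⟨a, b, z, hz, h1, h2, h3⟩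
  set r : ℝ := ‖z‖ with hrdef
  have hr0 : 0 ≤ r := norm_nonneg z
  have hr2 : r ^ 2 ≤ 1 := by nlinarith
  have hsq : ((Real.sqrt (1 - r ^ 2) : ℝ) : ℂ) ^ 2 = ((1 - r ^ 2 : ℝ) : ℂ) := by
    norm_cast
    exact Real.sq_sqrt (by linarith)
  have hzz : (starRingEnd ℂ) z * z = ((r ^ 2 : ℝ) : ℂ) := by
    rw [mul_comm, Complex.mul_conj, Complex.normSq_eq_norm_sq]
  have hI : Complex.I ^ 2 = -1 := Complex.I_sq
  -- key identity
  have key : ((3 * r ^ 2 + 1 : ℝ) : ℂ)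
      = ε * (-(a * b) * (a + b) + ε * (a * b) - ε * z) := by
    push_cast at hsq hzz ⊢
    linear_combination z * h1 + (a ^ 2 - ε * a) * h2 - 4 * hzz
      - (a * b + Complex.I * ((Real.sqrt (1 - r ^ 2) : ℝ) : ℂ)) * h3
      + ((Real.sqrt (1 - r ^ 2) : ℝ) : ℂ) ^ 2 * hI - hsq
  -- abs bounds
  have habs_ab : ‖a * b‖ ≤ 1 := by
    rw [← h3, norm_mul, Complex.norm_I, one_mul, Complex.norm_real, Real.norm_eq_abs,
      abs_of_nonneg (Real.sqrt_nonneg _)]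
    exact Real.sqrt_le_one.mpr (by nlinarith)
  have ha : ‖a‖ ≤ 3 := by
    have h1' : ‖a‖ * (‖a‖ - ε) ≤ 4 + ε ^ 2 := by
      have e1 : ‖a * (a - ε)‖ ≤ 4 * r + ε ^ 2 := by
        rw [← h1]
        calc ‖4 * (starRingEnd ℂ) z + (ε : ℂ) ^ 2‖
            ≤ ‖4 * (starRingEnd ℂ) z‖ + ‖(ε : ℂ) ^ 2‖ :=
              norm_add_le _ _
          _ = 4 * r + ε ^ 2 := by
              rw [norm_mul, norm_pow, Complex.norm_conj, Complex.norm_real]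
              simp [abs_of_pos hε, abs_of_nonneg, hrdef]
      have e2 : ‖a‖ - ε ≤ ‖a - ε‖ := by
        have := norm_add_le (a - (ε : ℂ)) (ε : ℂ)
        simp only [sub_add_cancel, Complex.norm_real, Real.norm_eq_abs, abs_of_pos hε] at this
        linarith
      have e3 : ‖a‖ * (‖a‖ - ε) ≤ ‖a * (a - ε)‖ := by
        rw [norm_mul]
        exact mul_le_mul_of_nonneg_left e2 (norm_nonneg a)
      nlinarith
    nlinarith [norm_nonneg a]
  have hb : ‖b‖ ≤ 2 := by
    have h2' : ‖b‖ * (‖b‖ - ε) ≤ 1 := by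
      have e2 : ‖b‖ - ε ≤ ‖b - ε‖ := by
        have := norm_add_le (b - (ε : ℂ)) (ε : ℂ)
        simp only [sub_add_cancel, Complex.norm_real, Real.norm_eq_abs, abs_of_pos hε] at this
        linarith
      have e3 : ‖b‖ * (‖b‖ - ε) ≤ ‖b * (b - ε)‖ := by
        rw [norm_mul]
        exact mul_le_mul_of_nonneg_left e2 (norm_nonneg b)
      rw [← h2] at e3
      exact e3.trans hz
    nlinarith [norm_nonneg b]
  -- take absolute values of key
  have hkey_abs : (3 * r ^ 2 + 1 : ℝ)
      = ε * ‖-(a * b) * (a + b) + ε * (a * b) - ε * z‖ := by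
    have := congrArg (‖·‖) key
    rwa [Complex.norm_real, Real.norm_eq_abs, abs_of_pos (by nlinarith : (0:ℝ) < 3 * r ^ 2 + 1),
      norm_mul, Complex.norm_real, Real.norm_eq_abs, abs_of_pos hε] at this
  have hT : ‖-(a * b) * (a + b) + ε * (a * b) - ε * z‖ ≤ 5 + 2 * ε := by
    calc ‖-(a * b) * (a + b) + ε * (a * b) - ε * z‖
        ≤ ‖-(a * b) * (a + b) + ε * (a * b)‖ + ‖(ε : ℂ) * z‖ :=
          norm_sub_le _ _
      _ ≤ ‖-(a * b) * (a + b)‖ + ‖(ε : ℂ) * (a * b)‖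
            + ‖(ε : ℂ) * z‖ := by
          have := norm_add_le (-(a * b) * (a + b)) ((ε : ℂ) * (a * b))
          linarith
      _ ≤ 1 * 5 + ε * 1 + ε * 1 := by
          have hab5 : ‖a + b‖ ≤ 5 := by
            have := norm_add_le a b
            linarith
          have t1 : ‖-(a * b) * (a + b)‖ ≤ 1 * 5 := by
            rw [norm_mul, norm_neg]
            exact mul_le_mul habs_ab hab5 (norm_nonneg _) (by norm_num)
          have t2 : ‖(ε : ℂ) * (a * b)‖ ≤ ε * 1 := by
            rw [norm_mul, Complex.norm_real, Real.norm_eq_abs, abs_of_pos hε]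
            exact mul_le_mul_of_nonneg_left habs_ab hε.le
          have t3 : ‖(ε : ℂ) * z‖ ≤ ε * 1 := by
            rw [norm_mul, Complex.norm_real, Real.norm_eq_abs, abs_of_pos hε]
            exact mul_le_mul_of_nonneg_left hz hε.le
          linarith
      _ ≤ 5 + 2 * ε := by linarith
  nlinarith [norm_nonneg (-(a * b) * (a + b) + ε * (a * b) - ε * z)]
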